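/- Let n ≥ 1, let T₀ > 0, and let (x_α, u_α, T_α) be a differentiable solution on [0,∞) of the PB-CS model with uniform weights a_{αβ} = 1 for all α, β, with T_α(t) > 0 for all α and t ≥ 0, whose initial data satisfy ∑_α u_α(0) = 0 and (1/n)∑_α (T_α(0) + ½‖u_α(0)‖²) = T₀. Then for all t ≥ 0: (d/dt) 𝒱(t)² = −2 ∑_{α=1}^n (T₀/T_α(t)) ‖u_α(t)‖², and 𝒱(t) ≤ e^{−t/n} 𝒱(0). -/

import Mathlib

open Finset

lemma aux_const_of_deriv_zero {E : Type*} [NormedAddCommGroup E] [NormedSpace ℝ E]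
    (f : ℝ → E) (hf : ∀ t ≥ (0:ℝ), HasDerivAt f 0 t) : ∀ t ≥ (0:ℝ), f t = f 0 := by
  intro t ht
  exact constant_of_has_deriv_right_zero
    (fun s hs => (hf s hs.1).continuousAt.continuousWithinAt)
    (fun s hs => (hf s hs.1).hasDerivWithinAt) t ⟨ht, le_refl t⟩

theorem stmt9 (n d : ℕ) (hn : 1 ≤ n) (T₀ : ℝ) (hT₀ : 0 < T₀)
    (x u : Fin n → ℝ → EuclideanSpace ℝ (Fin d)) (T : Fin n → ℝ → ℝ)
    (hTpos : ∀ α, ∀ t ≥ (0 : ℝ), 0 < T α t)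
    (hx : ∀ α, ∀ t ≥ (0 : ℝ), HasDerivAt (x α) (u α t) t)
    (hu : ∀ α, ∀ t ≥ (0 : ℝ), HasDerivAt (u α)
      ((T₀ / (n : ℝ)) • ∑ β, ((T β t)⁻¹ • u β t - (T α t)⁻¹ • u α t)) t)
    (hT : ∀ α, ∀ t ≥ (0 : ℝ), HasDerivAt (fun s => T α s + ‖u α s‖ ^ 2 / 2)
      ((T₀ ^ 2 / (n : ℝ)) * ∑ β, ((T α t)⁻¹ - (T β t)⁻¹)) t)
    (hu0 : ∑ α, u α 0 = 0)
    (hT0 : (n : ℝ)⁻¹ * ∑ α, (T α 0 + ‖u α 0‖ ^ 2 / 2) = T₀) :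
    ∀ t ≥ (0 : ℝ),
      HasDerivAt (fun s => ∑ α, ‖u α s‖ ^ 2)
        (-2 * ∑ α, (T₀ / T α t) * ‖u α t‖ ^ 2) t ∧
      Real.sqrt (∑ α, ‖u α t‖ ^ 2) ≤
        Real.exp (-t / (n : ℝ)) * Real.sqrt (∑ α, ‖u α 0‖ ^ 2) := by
  have hn0 : (0:ℝ) < (n:ℝ) := by exact_mod_cast Nat.pos_of_ne_zero (by omega)
  have hnne : (n:ℝ) ≠ 0 := hn0.ne'
  -- momentum conservation
  have hmom : ∀ t ≥ (0:ℝ), ∑ α, u α t = 0 := by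
    have h := aux_const_of_deriv_zero (fun s => ∑ α, u α s) ?_
    · intro t ht; rw [h t ht]; exact hu0
    · intro t ht
      have h1 := HasDerivAt.fun_sum (fun α (_ : α ∈ Finset.univ) => hu α t ht)
      have hz : ∑ α : Fin n, ∑ β : Fin n,
          ((T β t)⁻¹ • u β t - (T α t)⁻¹ • u α t) = 0 := by
        simp only [Finset.sum_sub_distrib]
        rw [Finset.sum_comm]
        exact sub_self _
      convert h1 using 1
      symm
      rw [← Finset.smul_sum, hz, smul_zero]
  -- energy conservation
  have hE : ∀ t ≥ (0:ℝ), ∑ α, (T α t + ‖u α t‖ ^ 2 / 2) = (n:ℝ) * T₀ := by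
    have h := aux_const_of_deriv_zero (fun s => ∑ α, (T α s + ‖u α s‖ ^ 2 / 2)) ?_
    · intro t ht
      rw [h t ht, ← hT0, ← mul_assoc, mul_inv_cancel₀ hnne, one_mul]
    · intro t ht
      have h1 := HasDerivAt.fun_sum (fun α (_ : α ∈ Finset.univ) => hT α t ht)
      have hz : ∑ α : Fin n, ∑ β : Fin n, ((T α t)⁻¹ - (T β t)⁻¹) = 0 := by
        simp only [Finset.sum_sub_distrib]
        rw [Finset.sum_comm]
        exact sub_self _
      convert h1 using 1
      symm
      rw [← Finset.mul_sum, hz, mul_zero]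
  -- temperature bound
  have hTle : ∀ α, ∀ t ≥ (0:ℝ), T α t ≤ (n:ℝ) * T₀ := by
    intro α t ht
    rw [← hE t ht]
    calc T α t ≤ T α t + ‖u α t‖ ^ 2 / 2 := by nlinarith [sq_nonneg ‖u α t‖]
      _ ≤ ∑ β, (T β t + ‖u β t‖ ^ 2 / 2) :=
        Finset.single_le_sum (fun β _ => add_nonneg (hTpos β t ht).le (by positivity : (0:ℝ) ≤ ‖u β t‖ ^ 2 / 2))
          (Finset.mem_univ α)
  -- the derivative formula
  have hF : ∀ t ≥ (0:ℝ), HasDerivAt (fun s => ∑ α, ‖u α s‖ ^ 2)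
      (-2 * ∑ α, (T₀ / T α t) * ‖u α t‖ ^ 2) t := by
    intro t ht
    have h1 : ∀ α : Fin n, HasDerivAt (fun s => ‖u α s‖ ^ 2)
        (2 * (inner ℝ ((T₀ / (n : ℝ)) • ∑ β, ((T β t)⁻¹ • u β t - (T α t)⁻¹ • u α t)) (u α t) : ℝ)) t := by
      intro α
      have h2 := (hu α t ht).inner ℝ (hu α t ht)
      simp only [real_inner_self_eq_norm_sq] at h2
      refine HasDerivAt.congr_deriv h2 (Eq.symm ?_)
      rw [real_inner_comm]
      ring
    have h2 := HasDerivAt.fun_sum (fun α (_ : α ∈ Finset.univ) => h1 α)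
    have hm := hmom t ht
    have hinner : ∀ α : Fin n,
        (inner ℝ ((T₀ / (n : ℝ)) • ∑ β, ((T β t)⁻¹ • u β t - (T α t)⁻¹ • u α t)) (u α t) : ℝ)
        = (T₀/(n:ℝ)) * (∑ β, (T β t)⁻¹ * (inner ℝ (u β t) (u α t) : ℝ)
            - (n:ℝ) * ((T α t)⁻¹ * ‖u α t‖ ^ 2)) := by
      intro α
      rw [real_inner_smul_left]
      congr 1
      rw [sum_inner]
      simp only [inner_sub_left, real_inner_smul_left, real_inner_self_eq_norm_sq]
      rw [Finset.sum_sub_distrib, Finset.sum_const, Finset.card_univ, Fintype.card_fin,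
        nsmul_eq_mul]
    have hzero : ∑ α : Fin n, ∑ β : Fin n, (T β t)⁻¹ * (inner ℝ (u β t) (u α t) : ℝ) = 0 := by
      rw [Finset.sum_comm]
      refine Finset.sum_eq_zero (fun β _ => ?_)
      rw [← Finset.mul_sum, ← inner_sum, hm, inner_zero_right, mul_zero]
    have key : ∑ α : Fin n, (2 *
        (inner ℝ ((T₀ / (n : ℝ)) • ∑ β, ((T β t)⁻¹ • u β t - (T α t)⁻¹ • u α t)) (u α t) : ℝ))
        = -2 * ∑ α, (T₀ / T α t) * ‖u α t‖ ^ 2 := by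
      simp only [hinner]
      calc ∑ α : Fin n, 2 * ((T₀/(n:ℝ)) * (∑ β, (T β t)⁻¹ * (inner ℝ (u β t) (u α t) : ℝ)
              - (n:ℝ) * ((T α t)⁻¹ * ‖u α t‖ ^ 2)))
          = (2*(T₀/(n:ℝ))) * ∑ α : Fin n, ∑ β : Fin n, (T β t)⁻¹ * (inner ℝ (u β t) (u α t) : ℝ)
            - ∑ α : Fin n, (2*(T₀/(n:ℝ))*(n:ℝ)) * ((T α t)⁻¹ * ‖u α t‖ ^ 2) := by
            rw [Finset.mul_sum, ← Finset.sum_sub_distrib]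
            exact Finset.sum_congr rfl (fun α _ => by ring)
        _ = -2 * ∑ α, (T₀ / T α t) * ‖u α t‖ ^ 2 := by
            rw [hzero, mul_zero, zero_sub, neg_eq_iff_eq_neg, ← neg_mul, neg_neg,
              Finset.mul_sum]
            refine Finset.sum_congr rfl (fun α _ => ?_)
            rw [div_eq_mul_inv T₀ (T α t)]
            field_simp
    exact h2.congr_deriv key
  intro t ht
  refine ⟨hF t ht, ?_⟩
  set F : ℝ → ℝ := fun s => ∑ α, ‖u α s‖ ^ 2 with hFdef
  have hFnonneg : ∀ s, 0 ≤ F s := fun s => Finset.sum_nonneg (fun α _ => by positivity)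
  set G : ℝ → ℝ := fun r => Real.exp (2 / (n:ℝ) * r) * F r with hGdef
  have hG : ∀ s ≥ (0:ℝ), HasDerivAt G
      (Real.exp (2/(n:ℝ)*s) * (2/(n:ℝ)) * F s
        + Real.exp (2/(n:ℝ)*s) * (-2 * ∑ α, (T₀ / T α s) * ‖u α s‖ ^ 2)) s := by
    intro s hs
    have he : HasDerivAt (fun r => Real.exp (2/(n:ℝ) * r)) (Real.exp (2/(n:ℝ)*s) * (2/(n:ℝ))) s := by
      simpa using ((hasDerivAt_id s).const_mul (2/(n:ℝ))).exp
    exact he.mul (hF s hs)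
  have hderiv_nonpos : ∀ s ∈ interior (Set.Ici (0:ℝ)), deriv G s ≤ 0 := by
    intro s hs
    rw [interior_Ici, Set.mem_Ioi] at hs
    rw [(hG s hs.le).deriv]
    set A : ℝ := ∑ α, (T₀ / T α s) * ‖u α s‖ ^ 2 with hA
    have hterm : F s ≤ (n:ℝ) * A := by
      rw [hA, Finset.mul_sum]
      refine Finset.sum_le_sum (fun α _ => ?_)
      have hp := hTpos α s hs.le
      have hl := hTle α s hs.le
      have h1 : (1:ℝ) ≤ (n:ℝ) * (T₀ / T α s) := by
        rw [← mul_div_assoc, le_div_iff₀ hp]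
        linarith
      nlinarith [sq_nonneg ‖u α s‖]
    have h3 : (2/(n:ℝ)) * F s ≤ 2 * A := by
      rw [div_mul_eq_mul_div, div_le_iff₀ hn0]
      nlinarith [hterm]
    have hexp : (0:ℝ) < Real.exp (2/(n:ℝ)*s) := Real.exp_pos _
    nlinarith [mul_le_mul_of_nonneg_left h3 hexp.le]
  have hanti : AntitoneOn G (Set.Ici (0:ℝ)) := by
    refine antitoneOn_of_deriv_nonpos (convex_Ici 0)
      (fun s hs => (hG s hs).continuousAt.continuousWithinAt) ?_ hderiv_nonpos
    intro s hs
    rw [interior_Ici, Set.mem_Ioi] at hs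
    exact (hG s hs.le).differentiableAt.differentiableWithinAt
  have hGle : G t ≤ G 0 := hanti Set.self_mem_Ici (Set.mem_Ici.mpr ht) ht
  have hG0 : G 0 = F 0 := by simp [hGdef]
  have hFt : F t ≤ Real.exp (-(2/(n:ℝ)*t)) * F 0 := by
    have h1 : Real.exp (2/(n:ℝ)*t) * F t ≤ F 0 := by rw [← hG0]; exact hGle
    have h2 : Real.exp (-(2/(n:ℝ)*t)) * (Real.exp (2/(n:ℝ)*t) * F t)
        ≤ Real.exp (-(2/(n:ℝ)*t)) * F 0 :=
      mul_le_mul_of_nonneg_left h1 (Real.exp_pos _).le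
    rwa [← mul_assoc, ← Real.exp_add, neg_add_cancel, Real.exp_zero, one_mul] at h2
  calc Real.sqrt (F t) ≤ Real.sqrt (Real.exp (-(2/(n:ℝ)*t)) * F 0) := Real.sqrt_le_sqrt hFt
    _ = Real.exp (-t/(n:ℝ)) * Real.sqrt (F 0) := by
        rw [Real.sqrt_mul (Real.exp_pos _).le]
        congr 1
        rw [show -(2/(n:ℝ)*t) = ((2:ℕ):ℝ) * (-t/(n:ℝ)) by push_cast; ring,
          Real.exp_nat_mul, Real.sqrt_sq (Real.exp_pos _).le]
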